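/- arXiv:2301.13427 — 2 statements merged into one kernel-verified Lean document; each statement's English description precedes it below -/
import Mathlib

section
/- For each fixed x ∈ ℝⁿ, the function Y ↦ xᵀY^{1/2}x is concave on the set S⁺ⁿ of symmetric positive semidefinite n×n real matrices, where Y^{1/2} denotes the unique symmetric positive semidefinite square root of Y. Consequently f(x, Y) = xᵀY^{1/2}x is a saddle function on ℝⁿ × S⁺ⁿ. -/
open Matrix

/-- A nonnegative real multiple of a PSD matrix is PSD. -/
lemma psd_smul_aux {n : ℕ} {A : Matrix (Fin n) (Fin n) ℝ} (hA : A.PosSemidef)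
    {c : ℝ} (hc : 0 ≤ c) : (c • A).PosSemidef := by
  refine Matrix.PosSemidef.of_dotProduct_mulVec_nonneg ?_ fun x => ?_
  · unfold Matrix.IsHermitian
    rw [conjTranspose_smul, hA.1]
    simp
  · rw [smul_mulVec, dotProduct_smul, smul_eq_mul]
    exact mul_nonneg hc (hA.dotProduct_mulVec_nonneg x)

/-- Operator monotonicity ingredient: if `X, S` are PSD and `X² ⪯ S²` then `X ⪯ S`. -/
lemma sqrt_mono_aux {n : ℕ} {X S : Matrix (Fin n) (Fin n) ℝ}
    (hX : X.PosSemidef) (hS : S.PosSemidef)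
    (h : (S * S - X * X).PosSemidef) : (S - X).PosSemidef := by
  have hD : (S - X).IsHermitian := hS.1.sub hX.1
  refine hD.posSemidef_iff_eigenvalues_nonneg.mpr fun i => (?_ : (0 : ℝ) ≤ hD.eigenvalues i)
  by_contra hneg
  push_neg at hneg
  set t : ℝ := hD.eigenvalues i with ht
  set v : Fin n → ℝ := ⇑(hD.eigenvectorBasis i) with hvdef
  have hv : (S - X) *ᵥ v = t • v := hD.mulVec_eigenvectorBasis i
  have hvne : v ≠ 0 := by
    intro h0
    have hnorm := hD.eigenvectorBasis.orthonormal.1 i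
    rw [show (hD.eigenvectorBasis i : EuclideanSpace ℝ (Fin n)) = (0 : EuclideanSpace ℝ (Fin n))
        from WithLp.ofLp_injective 2 h0, norm_zero] at hnorm
    norm_num at hnorm
  -- positivity of ‖v‖²
  have hvv : 0 < v ⬝ᵥ v := by
    rcases eq_or_lt_of_le (Finset.sum_nonneg fun j _ => mul_self_nonneg (v j)) with he | hlt
    · exfalso
      apply hvne
      funext j
      have := (Finset.sum_eq_zero_iff_of_nonneg
        (fun j _ => mul_self_nonneg (v j))).mp he.symm j (Finset.mem_univ j)
      exact mul_self_eq_zero.mp this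
    · exact hlt
  -- eigen equation for X - S with positive eigenvalue t' = -t
  have hv' : (X - S) *ᵥ v = (-t) • v := by
    have : (X - S) = -(S - X) := by rw [neg_sub]
    rw [this, neg_mulVec, hv, neg_smul]
  -- the key quadratic form computation
  have hXsym : Xᵀ = X := by
    have := hX.1; rwa [Matrix.IsHermitian, conjTranspose_eq_transpose_of_trivial] at this
  have hSsym : Sᵀ = S := by
    have := hS.1; rwa [Matrix.IsHermitian, conjTranspose_eq_transpose_of_trivial] at this
  have hsplit : X * X - S * S = X * (X - S) + (X - S) * S := by noncomm_ring
  have e1 : v ⬝ᵥ (X * (X - S)) *ᵥ v = (-t) * (v ⬝ᵥ X *ᵥ v) := by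
    rw [← mulVec_mulVec, hv', mulVec_smul, dotProduct_smul, smul_eq_mul]
  have e2 : v ⬝ᵥ ((X - S) * S) *ᵥ v = (-t) * (v ⬝ᵥ S *ᵥ v) := by
    rw [← mulVec_mulVec, dotProduct_mulVec, ← mulVec_transpose,
      show (X - S)ᵀ = X - S by rw [transpose_sub, hXsym, hSsym], hv', smul_dotProduct,
      smul_eq_mul, dotProduct_mulVec]
  have key : v ⬝ᵥ (X * X - S * S) *ᵥ v = (-t) * (v ⬝ᵥ X *ᵥ v + v ⬝ᵥ S *ᵥ v) := by
    rw [hsplit, add_mulVec, dotProduct_add, e1, e2]; ring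
  -- from PSD hypotheses
  have hle : 0 ≤ v ⬝ᵥ (S * S - X * X) *ᵥ v := by simpa using h.dotProduct_mulVec_nonneg v
  have hXv : 0 ≤ v ⬝ᵥ X *ᵥ v := by simpa using hX.dotProduct_mulVec_nonneg v
  have hSv : 0 ≤ v ⬝ᵥ S *ᵥ v := by simpa using hS.dotProduct_mulVec_nonneg v
  have hneg' : 0 < -t := by linarith
  have hsum0 : v ⬝ᵥ X *ᵥ v + v ⬝ᵥ S *ᵥ v ≤ 0 := by
    have : v ⬝ᵥ (S * S - X * X) *ᵥ v = -((-t) * (v ⬝ᵥ X *ᵥ v + v ⬝ᵥ S *ᵥ v)) := by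
      rw [← key, show S * S - X * X = -(X * X - S * S) from (neg_sub _ _).symm, neg_mulVec, dotProduct_neg]
    rw [this] at hle
    nlinarith
  have hXv0 : v ⬝ᵥ X *ᵥ v = 0 := by linarith
  have hSv0 : v ⬝ᵥ S *ᵥ v = 0 := by linarith
  -- but v ⬝ᵥ (X - S) v = -t ‖v‖² > 0 while also = 0
  have : v ⬝ᵥ (X - S) *ᵥ v = (-t) * (v ⬝ᵥ v) := by
    rw [hv', dotProduct_smul, smul_eq_mul]
  rw [sub_mulVec, dotProduct_sub, hXv0, hSv0] at this
  nlinarith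

/-- For fixed `x ∈ ℝⁿ`, the function `Y ↦ xᵀ Y^{1/2} x` is
concave on the set `S⁺ⁿ` of symmetric positive semidefinite matrices, where
`Y^{1/2}` is the unique symmetric PSD square root (here given by any function
`sqrt` satisfying the defining property of the matrix square root on `S⁺ⁿ`).
Consequently `f(x, Y) = xᵀ Y^{1/2} x` is a saddle function on `ℝⁿ × S⁺ⁿ`:
it is additionally convex in `x` for each fixed `Y ∈ S⁺ⁿ`. -/
theorem sqrt_quad_form_saddle (n : ℕ)
    (sqrt : Matrix (Fin n) (Fin n) ℝ → Matrix (Fin n) (Fin n) ℝ)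
    (hsqrt : ∀ Y : Matrix (Fin n) (Fin n) ℝ, Y.PosSemidef →
      (sqrt Y).PosSemidef ∧ sqrt Y * sqrt Y = Y) :
    (∀ x : Fin n → ℝ,
      ConcaveOn ℝ {Y : Matrix (Fin n) (Fin n) ℝ | Y.PosSemidef}
        fun Y : Matrix (Fin n) (Fin n) ℝ => x ⬝ᵥ (sqrt Y *ᵥ x)) ∧
    (∀ Y : Matrix (Fin n) (Fin n) ℝ, Y.PosSemidef →
      ConvexOn ℝ Set.univ fun x : Fin n → ℝ => x ⬝ᵥ (sqrt Y *ᵥ x)) := by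
  have hconvset : Convex ℝ {Y : Matrix (Fin n) (Fin n) ℝ | Y.PosSemidef} := by
    intro A hA B hB a b ha hb hab
    exact (psd_smul_aux hA ha).add (psd_smul_aux hB hb)
  constructor
  · intro x
    refine ⟨hconvset, fun A hA B hB a b ha hb hab => ?_⟩
    simp only [Set.mem_setOf_eq] at hA hB
    obtain ⟨hPA, hPA2⟩ := hsqrt A hA
    obtain ⟨hPB, hPB2⟩ := hsqrt B hB
    have hC : (a • A + b • B).PosSemidef := hconvset hA hB ha hb hab
    obtain ⟨hPC, hPC2⟩ := hsqrt _ hC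
    set P := sqrt A
    set Q := sqrt B
    set T := a • P + b • Q with hT
    have hTpsd : T.PosSemidef := (psd_smul_aux hPA ha).add (psd_smul_aux hPB hb)
    -- (P - Q)² is PSD
    have hPQsym : (P - Q)ᵀ = P - Q := by
      have h1 := hPA.1; have h2 := hPB.1
      rw [Matrix.IsHermitian, conjTranspose_eq_transpose_of_trivial] at h1 h2
      rw [transpose_sub, h1, h2]
    have hsq : ((P - Q) * (P - Q)).PosSemidef := by
      have := Matrix.posSemidef_conjTranspose_mul_self (P - Q)
      rwa [conjTranspose_eq_transpose_of_trivial, hPQsym] at this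
    -- C - T² = a*b • (P-Q)²
    have hdiff : sqrt (a • A + b • B) * sqrt (a • A + b • B) - T * T
        = (a * b) • ((P - Q) * (P - Q)) := by
      rw [hPC2, hT, ← hPA2, ← hPB2]
      have hPQ : (P - Q) * (P - Q) = P * P - P * Q - Q * P + Q * Q := by noncomm_ring
      rw [hPQ]
      simp only [add_mul, mul_add, smul_mul_assoc, mul_smul_comm, smul_smul, smul_sub, smul_add]
      match_scalars <;> (try (have hb' : b = 1 - a := by linarith); try subst hb') <;> ring
    have hdiffpsd : (sqrt (a • A + b • B) * sqrt (a • A + b • B) - T * T).PosSemidef := by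
      rw [hdiff]; exact psd_smul_aux hsq (mul_nonneg ha hb)
    have hmono := sqrt_mono_aux hTpsd hPC hdiffpsd
    have hquad : 0 ≤ x ⬝ᵥ (sqrt (a • A + b • B) - T) *ᵥ x := by simpa using hmono.dotProduct_mulVec_nonneg x
    rw [sub_mulVec, dotProduct_sub] at hquad
    have hTform : x ⬝ᵥ T *ᵥ x = a * (x ⬝ᵥ P *ᵥ x) + b * (x ⬝ᵥ Q *ᵥ x) := by
      rw [hT, add_mulVec, smul_mulVec, smul_mulVec, dotProduct_add,
        dotProduct_smul, dotProduct_smul, smul_eq_mul, smul_eq_mul]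
    simp only [smul_eq_mul]
    rw [hTform] at hquad
    linarith
  · intro Y hY
    obtain ⟨hP, _⟩ := hsqrt Y hY
    refine ⟨convex_univ, fun u _ w _ a b ha hb hab => ?_⟩
    have hkey : 0 ≤ (u - w) ⬝ᵥ sqrt Y *ᵥ (u - w) := by simpa using hP.dotProduct_mulVec_nonneg (u - w)
    have hsym : (sqrt Y)ᵀ = sqrt Y := by
      have := hP.1; rwa [Matrix.IsHermitian, conjTranspose_eq_transpose_of_trivial] at this
    have hswap : w ⬝ᵥ sqrt Y *ᵥ u = u ⬝ᵥ sqrt Y *ᵥ w := by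
      rw [dotProduct_mulVec, ← mulVec_transpose, hsym, dotProduct_comm, dotProduct_mulVec]
    simp only [smul_eq_mul, Pi.add_apply, Pi.smul_apply]
    have hexp : (a • u + b • w) ⬝ᵥ sqrt Y *ᵥ (a • u + b • w)
        = a * a * (u ⬝ᵥ sqrt Y *ᵥ u) + b * b * (w ⬝ᵥ sqrt Y *ᵥ w)
          + (a * b) * (u ⬝ᵥ sqrt Y *ᵥ w) + (a * b) * (w ⬝ᵥ sqrt Y *ᵥ u) := by
      simp only [mulVec_add, mulVec_smul, dotProduct_add, add_dotProduct,
        dotProduct_smul, smul_dotProduct, smul_eq_mul, smul_smul]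
      ring
    simp only [mulVec_sub, sub_dotProduct, dotProduct_sub] at hkey
    rw [hswap] at hkey
    rw [hexp, hswap]
    have hb' : b = 1 - a := by linarith
    subst hb'
    nlinarith [mul_nonneg (mul_nonneg ha hb) hkey]
end

section
/- (Equivalence of the robust cost LP and its dualized form.) Let A ∈ ℝ^{p×n}, b ∈ ℝᵖ, F ∈ ℝ^{m×n}, g ∈ ℝᵐ, and suppose C = {c ∈ ℝⁿ : Fc ≤ g} is nonempty. If (x⋆, λ⋆) is an optimal solution of the LP: minimize gᵀλ subject to Ax = b, x ≥ 0, Fᵀλ = x, λ ≥ 0 (over variables x ∈ ℝⁿ, λ ∈ ℝᵐ), then x⋆ is an optimal solution of the robust cost LP: minimize sup_{c ∈ C} cᵀx subject to Ax = b, x ≥ 0, and the two problems have the same optimal value. -/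
open Matrix

open Matrix Finset

variable {E : Type*} [NormedAddCommGroup E] [InnerProductSpace ℝ E]

/-- Conic Carathéodory: any nonnegative combination is a nonnegative combination over a
linearly independent subfamily. -/
theorem cone_caratheodory {ι : Type*} [Fintype ι] [DecidableEq ι] (v : ι → E) (b : E)
    (s : Finset ι) (t : ι → ℝ) (ht : ∀ i, 0 ≤ t i) (hb : ∑ i ∈ s, t i • v i = b) :
    ∃ s' : Finset ι, LinearIndependent ℝ (fun i : s' => v i) ∧
      ∃ t' : ι → ℝ, (∀ i, 0 ≤ t' i) ∧ ∑ i ∈ s', t' i • v i = b := by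
  induction s using Finset.strongInduction generalizing t with
  | _ s IH =>
  by_cases hLI : LinearIndependent ℝ (fun i : s => v i)
  · exact ⟨s, hLI, t, ht, hb⟩
  · -- get a nontrivial dependence
    rw [Fintype.linearIndependent_iff] at hLI
    push_neg at hLI
    obtain ⟨gdep, hg0, j0, hj0⟩ := hLI
    -- extend gdep to a function r on ι, zero outside s
    set r : ι → ℝ := fun i => if h : i ∈ s then gdep ⟨i, h⟩ else 0 with hr
    have hrsum : ∑ i ∈ s, r i • v i = 0 := by
      rw [← hg0, ← Finset.sum_coe_sort s (fun i => r i • v i)]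
      refine Finset.sum_congr rfl fun i _ => ?_
      simp [hr, i.2]
    have hrne : ∃ i ∈ s, r i ≠ 0 := ⟨j0, j0.2, by simpa [hr, j0.2] using hj0⟩
    -- WLOG some r i > 0 on s
    have key : ∀ r : ι → ℝ, (∑ i ∈ s, r i • v i = 0) → (∃ i ∈ s, 0 < r i) →
        ∃ s' : Finset ι, LinearIndependent ℝ (fun i : s' => v i) ∧
          ∃ t' : ι → ℝ, (∀ i, 0 ≤ t' i) ∧ ∑ i ∈ s', t' i • v i = b := by
      intro r hrsum hrpos
      classical
      set T : Finset ι := s.filter (fun i => 0 < r i) with hT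
      have hTne : T.Nonempty := by
        obtain ⟨i, hi, hpos⟩ := hrpos
        exact ⟨i, by simp [hT, hi, hpos]⟩
      obtain ⟨i0, hi0T, hmin⟩ := T.exists_min_image (fun i => t i / r i) hTne
      have hi0s : i0 ∈ s := (Finset.mem_filter.mp hi0T).1
      have hri0 : 0 < r i0 := (Finset.mem_filter.mp hi0T).2
      set ρ : ℝ := t i0 / r i0 with hρ
      have hρ0 : 0 ≤ ρ := div_nonneg (ht i0) hri0.le
      set t1 : ι → ℝ := fun i => t i - ρ * r i with ht1
      have ht1nng : ∀ i ∈ s, 0 ≤ t1 i := by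
        intro i hi
        by_cases hpos : 0 < r i
        · have : ρ ≤ t i / r i := hmin i (Finset.mem_filter.mpr ⟨hi, hpos⟩)
          have := mul_le_mul_of_nonneg_right this hpos.le
          rw [div_mul_cancel₀ _ hpos.ne'] at this
          simpa [ht1, mul_comm] using this
        · push_neg at hpos
          have : ρ * r i ≤ 0 := mul_nonpos_of_nonneg_of_nonpos hρ0 hpos
          have := ht i
          simp only [ht1]; linarith
      have ht1i0 : t1 i0 = 0 := by
        simp [ht1, hρ, div_mul_cancel₀ _ hri0.ne']
      have hsum1 : ∑ i ∈ s, t1 i • v i = b := by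
        have : ∑ i ∈ s, t1 i • v i = ∑ i ∈ s, t i • v i - ρ • ∑ i ∈ s, r i • v i := by
          rw [Finset.smul_sum, ← Finset.sum_sub_distrib]
          refine Finset.sum_congr rfl fun i _ => ?_
          simp [ht1, sub_smul, smul_smul]
        rw [this, hrsum, smul_zero, sub_zero, hb]
      -- restrict to s.erase i0
      set t2 : ι → ℝ := fun i => if i ∈ s.erase i0 then t1 i else 0 with ht2
      have ht2nng : ∀ i, 0 ≤ t2 i := by
        intro i
        simp only [ht2]
        split
        · exact ht1nng i (Finset.mem_of_mem_erase ‹_›)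
        · exact le_refl 0
      have hsum2 : ∑ i ∈ s.erase i0, t2 i • v i = b := by
        have h1 : ∑ i ∈ s.erase i0, t2 i • v i = ∑ i ∈ s.erase i0, t1 i • v i :=
          Finset.sum_congr rfl fun i hi => by simp only [ht2]; rw [if_pos hi]
        rw [h1, ← hsum1, ← Finset.add_sum_erase s (fun i => t1 i • v i) hi0s,
          ht1i0, zero_smul, zero_add]
      exact IH (s.erase i0) (Finset.erase_ssubset hi0s) t2 ht2nng hsum2
    obtain ⟨i, hi, hne⟩ := hrne
    rcases Ne.lt_or_gt hne with hneg | hpos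
    · refine key (fun i => -r i) ?_ ⟨i, hi, show (0:ℝ) < -r i from neg_pos.mpr hneg⟩
      simp only [neg_smul, Finset.sum_neg_distrib, hrsum, neg_zero]
    · exact key r hrsum ⟨i, hi, hpos⟩

open Matrix Finset

variable {E : Type*} [NormedAddCommGroup E] [InnerProductSpace ℝ E] [FiniteDimensional ℝ E]

theorem isClosed_finGenCone {ι : Type*} [Fintype ι] [DecidableEq ι] (v : ι → E) :
    IsClosed {b : E | ∃ t : ι → ℝ, (∀ i, 0 ≤ t i) ∧ ∑ i, t i • v i = b} := by
  classical
  have hpiece : ∀ s : Finset ι, LinearIndependent ℝ (fun i : s => v i) →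
      IsClosed {b : E | ∃ t : ι → ℝ, (∀ i, 0 ≤ t i) ∧ ∑ i ∈ s, t i • v i = b} := by
    intro s hLI
    set T : ({ x // x ∈ s } → ℝ) →ₗ[ℝ] E :=
      { toFun := fun u => ∑ i : s, u i • v i
        map_add' := by intro u w; simp [add_smul, Finset.sum_add_distrib]
        map_smul' := by intro c u; simp [smul_smul, Finset.smul_sum] } with hT
    have hinj : Function.Injective T := by
      rw [← LinearMap.ker_eq_bot, LinearMap.ker_eq_bot']
      intro u hu
      exact funext (Fintype.linearIndependent_iff.mp hLI u hu)
    have hCE := T.isClosedEmbedding_of_injective (LinearMap.ker_eq_bot.mpr hinj)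
    have hclosed : IsClosed {u : { x // x ∈ s } → ℝ | ∀ i, 0 ≤ u i} := by
      have : {u : { x // x ∈ s } → ℝ | ∀ i, 0 ≤ u i} = ⋂ i, {u | 0 ≤ u i} := by
        ext u; simp [Set.mem_iInter]
      rw [this]
      exact isClosed_iInter fun i => isClosed_le continuous_const (continuous_apply i)
    have himg : {b : E | ∃ t : ι → ℝ, (∀ i, 0 ≤ t i) ∧ ∑ i ∈ s, t i • v i = b}
        = T '' {u | ∀ i, 0 ≤ u i} := by
      ext b
      constructor
      · rintro ⟨t, ht, hsum⟩
        refine ⟨fun i => t i, fun i => ht i, ?_⟩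
        simp only [hT, LinearMap.coe_mk, AddHom.coe_mk]
        change ∑ i : s, t i • v i = b
        rw [Finset.sum_coe_sort s (fun i => t i • v i)]
        exact hsum
      · rintro ⟨u, hu, hsum⟩
        refine ⟨fun i => if h : i ∈ s then u ⟨i, h⟩ else 0, fun i => ?_, ?_⟩
        · by_cases h : i ∈ s <;> simp [h]
          exact hu ⟨i, h⟩
        · rw [← Finset.sum_coe_sort s]
          rw [← hsum]
          refine Finset.sum_congr rfl fun i _ => ?_
          simp [i.2]
    rw [himg]
    exact hCE.isClosedMap _ hclosed
  have hunion : {b : E | ∃ t : ι → ℝ, (∀ i, 0 ≤ t i) ∧ ∑ i, t i • v i = b}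
      = ⋃ s ∈ {s : Finset ι | LinearIndependent ℝ (fun i : s => v i)},
          {b : E | ∃ t : ι → ℝ, (∀ i, 0 ≤ t i) ∧ ∑ i ∈ s, t i • v i = b} := by
    ext b
    simp only [Set.mem_setOf_eq, Set.mem_iUnion]
    constructor
    · rintro ⟨t, ht, hsum⟩
      obtain ⟨s', hLI, t', ht', hsum'⟩ := cone_caratheodory v b Finset.univ t ht hsum
      exact ⟨s', hLI, t', ht', hsum'⟩
    · rintro ⟨s, hLI, t, ht, hsum⟩
      refine ⟨fun i => if i ∈ s then t i else 0, fun i => ?_, ?_⟩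
      · by_cases h : i ∈ s <;> simp [h, ht i]
      · rw [← Finset.sum_subset (Finset.subset_univ s)
          (fun i _ hi => by simp [hi])]
        rw [← hsum]
        exact Finset.sum_congr rfl fun i hi => by simp [hi]
  rw [hunion]
  exact Set.Finite.isClosed_biUnion (Set.toFinite _) fun s hs => hpiece s hs

open scoped InnerProductSpace in
/-- Farkas lemma. -/
theorem farkas_inner {ι : Type*} [Fintype ι] [DecidableEq ι] (v : ι → E) (b : E)
    (h : ¬ ∃ t : ι → ℝ, (∀ i, 0 ≤ t i) ∧ ∑ i, t i • v i = b) :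
    ∃ y : E, (∀ i, 0 ≤ ⟪v i, y⟫_ℝ) ∧ ⟪y, b⟫_ℝ < 0 := by
  classical
  set K : ConvexCone ℝ E :=
    { carrier := {b : E | ∃ t : ι → ℝ, (∀ i, 0 ≤ t i) ∧ ∑ i, t i • v i = b}
      smul_mem' := by
        rintro c hc x ⟨t, ht, hsum⟩
        exact ⟨fun i => c * t i, fun i => mul_nonneg hc.le (ht i), by
          simp only [← hsum, Finset.smul_sum, smul_smul]⟩
      add_mem' := by
        rintro x ⟨t, ht, hsum⟩ y ⟨u, hu, husum⟩
        exact ⟨fun i => t i + u i, fun i => add_nonneg (ht i) (hu i), by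
          simp only [← hsum, ← husum, add_smul, Finset.sum_add_distrib]⟩ } with hK
  have hne : (K : Set E).Nonempty := ⟨0, ⟨0, fun i => le_refl 0, by simp⟩⟩
  have hclosed : IsClosed (K : Set E) := isClosed_finGenCone v
  have hpt : K.Pointed := ⟨0, fun i => le_refl 0, by simp⟩
  obtain ⟨y, hy1, hy2⟩ := ProperCone.hyperplane_separation' (x₀ := b)
    ({ toSubmodule := K.toPointedCone hpt, isClosed' := hclosed } : ProperCone ℝ E) h
  refine ⟨y, fun i => ?_, by rwa [real_inner_comm]⟩
  refine hy1 (v i) ⟨fun j => if j = i then 1 else 0, fun j => by positivity, ?_⟩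
  simp [ite_smul]
theorem farkas_matrix {k d : ℕ} (M : Matrix (Fin k) (Fin d) ℝ) (b : Fin d → ℝ)
    (h : ¬ ∃ t : Fin k → ℝ, (∀ i, 0 ≤ t i) ∧ Mᵀ *ᵥ t = b) :
    ∃ y : Fin d → ℝ, (∀ i, 0 ≤ (M *ᵥ y) i) ∧ b ⬝ᵥ y < 0 := by
  classical
  set v : Fin k → EuclideanSpace ℝ (Fin d) := fun i => (WithLp.equiv 2 _).symm (M i) with hv
  set b' : EuclideanSpace ℝ (Fin d) := (WithLp.equiv 2 _).symm b with hb'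
  have happly : ∀ (t : Fin k → ℝ) (j : Fin d), (∑ i, t i • v i) j = (Mᵀ *ᵥ t) j := by
    intro t j
    have : (∑ i, t i • v i) j = ∑ i, (t i • v i) j :=
      by rw [WithLp.ofLp_sum]; exact Finset.sum_apply j Finset.univ _
    rw [this]
    simp [hv, Matrix.mulVec, dotProduct, Matrix.transpose_apply, mul_comm]
  have hprem : ¬ ∃ t : Fin k → ℝ, (∀ i, 0 ≤ t i) ∧ ∑ i, t i • v i = b' := by
    rintro ⟨t, ht, hsum⟩
    refine h ⟨t, ht, ?_⟩
    funext j
    rw [← happly t j]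
    exact congrFun (congrArg (WithLp.equiv 2 _) hsum) j
  obtain ⟨y, hy1, hy2⟩ := farkas_inner v b' hprem
  refine ⟨fun j => y j, fun i => ?_, ?_⟩
  · have := hy1 i
    rw [PiLp.inner_apply] at this
    simpa [hv, Matrix.mulVec, dotProduct, mul_comm] using this
  · have := hy2
    rw [PiLp.inner_apply] at this
    simpa [hb', dotProduct, mul_comm] using this

/-- equivalence of the robust cost LP and its dualized form:
if `C = {c : Fc ≤ g}` is nonempty and `(x⋆, λ⋆)` is optimal for the LP
`minimize gᵀλ s.t. Ax = b, x ≥ 0, Fᵀλ = x, λ ≥ 0`, then `x⋆` is optimal for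
the robust cost LP `minimize sup_{c ∈ C} cᵀx s.t. Ax = b, x ≥ 0`, and the two
problems have the same optimal value. -/
theorem robust_lp_dualization_equivalence (n m p : ℕ)
    (A : Matrix (Fin p) (Fin n) ℝ) (b : Fin p → ℝ)
    (F : Matrix (Fin m) (Fin n) ℝ) (g : Fin m → ℝ)
    (hC : {c : Fin n → ℝ | ∀ i, (F *ᵥ c) i ≤ g i}.Nonempty)
    (xs : Fin n → ℝ) (ls : Fin m → ℝ)
    (hfeas : A *ᵥ xs = b ∧ (∀ i, 0 ≤ xs i) ∧ Fᵀ *ᵥ ls = xs ∧ (∀ i, 0 ≤ ls i))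
    (hopt : ∀ (x : Fin n → ℝ) (l : Fin m → ℝ),
      A *ᵥ x = b → (∀ i, 0 ≤ x i) → Fᵀ *ᵥ l = x → (∀ i, 0 ≤ l i) →
        g ⬝ᵥ ls ≤ g ⬝ᵥ l) :
    (A *ᵥ xs = b ∧ (∀ i, 0 ≤ xs i)) ∧
    (∀ x : Fin n → ℝ, A *ᵥ x = b → (∀ i, 0 ≤ x i) →
      (⨆ c ∈ {c : Fin n → ℝ | ∀ i, (F *ᵥ c) i ≤ g i}, ((c ⬝ᵥ xs : ℝ) : EReal)) ≤
        ⨆ c ∈ {c : Fin n → ℝ | ∀ i, (F *ᵥ c) i ≤ g i}, ((c ⬝ᵥ x : ℝ) : EReal)) ∧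
    (⨆ c ∈ {c : Fin n → ℝ | ∀ i, (F *ᵥ c) i ≤ g i}, ((c ⬝ᵥ xs : ℝ) : EReal)) =
      ((g ⬝ᵥ ls : ℝ) : EReal) := by

  classical
  obtain ⟨hAxs, hxs, hFls, hls⟩ := hfeas
  set C : Set (Fin n → ℝ) := {c : Fin n → ℝ | ∀ i, (F *ᵥ c) i ≤ g i} with hCdef
  set val : ℝ := g ⬝ᵥ ls with hval
  -- Weak duality
  have hweak : ∀ c ∈ C, c ⬝ᵥ xs ≤ val := by
    intro c hc
    have h1 : c ⬝ᵥ xs = (F *ᵥ c) ⬝ᵥ ls := by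
      rw [← hFls, dotProduct_mulVec, Matrix.vecMul_transpose]
    rw [h1, hval]
    exact Finset.sum_le_sum fun i _ => mul_le_mul_of_nonneg_right (hc i) (hls i)
  -- Key lemma: for any feasible x and any w < val, some c ∈ C has c ⬝ᵥ x > w.
  have hkey : ∀ x : Fin n → ℝ, A *ᵥ x = b → (∀ i, 0 ≤ x i) →
      ∀ w : ℝ, w < val → ∃ c ∈ C, w < c ⬝ᵥ x := by
    intro x hAx hx w hw
    set M : Matrix (Fin (m+1)) (Fin (n+1)) ℝ :=
      Matrix.of (Fin.snoc (fun i0 => Fin.snoc (F i0) (g i0)) (Fin.snoc (0 : Fin n → ℝ) 1))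
      with hM
    have hprem : ¬ ∃ t : Fin (m+1) → ℝ, (∀ i, 0 ≤ t i) ∧ Mᵀ *ᵥ t = Fin.snoc x w := by
      rintro ⟨t, ht, hsum⟩
      set l : Fin m → ℝ := fun i0 => t i0.castSucc with hl
      have hFl : Fᵀ *ᵥ l = x := by
        funext j0
        have := congrFun hsum j0.castSucc
        simp only [Matrix.mulVec, dotProduct, Matrix.transpose_apply,
          Fin.sum_univ_castSucc, hM, Matrix.of_apply, Fin.snoc_castSucc, Fin.snoc_last,
          Pi.zero_apply, zero_mul, add_zero] at this ⊢
        exact this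
      have hgl : g ⬝ᵥ l + t (Fin.last m) = w := by
        have := congrFun hsum (Fin.last n)
        simp only [Matrix.mulVec, dotProduct, Matrix.transpose_apply,
          Fin.sum_univ_castSucc, hM, Matrix.of_apply, Fin.snoc_castSucc, Fin.snoc_last,
          one_mul] at this
        simpa [dotProduct, hl] using this
      have hopt' := hopt x l hAx hx hFl (fun i0 => ht i0.castSucc)
      have hlast := ht (Fin.last m)
      linarith
    obtain ⟨y, hy1, hy2⟩ := farkas_matrix M (Fin.snoc x w) hprem
    set c' : Fin n → ℝ := fun j0 => y j0.castSucc with hc'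
    set τ : ℝ := y (Fin.last n) with hτdef
    have hrow : ∀ i0 : Fin m, 0 ≤ (F *ᵥ c') i0 + g i0 * τ := by
      intro i0
      have := hy1 i0.castSucc
      simpa only [Matrix.mulVec, dotProduct, Fin.sum_univ_castSucc, hM,
        Matrix.of_apply, Fin.snoc_castSucc, Fin.snoc_last] using this
    have hτ : 0 ≤ τ := by
      have := hy1 (Fin.last m)
      simpa only [Matrix.mulVec, dotProduct, Fin.sum_univ_castSucc, hM,
        Matrix.of_apply, Fin.snoc_castSucc, Fin.snoc_last, Pi.zero_apply, zero_mul,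
        Finset.sum_const_zero, zero_add, one_mul] using this
    have hbneg : x ⬝ᵥ c' + w * τ < 0 := by
      have := hy2
      simpa only [dotProduct, Fin.sum_univ_castSucc, Fin.snoc_castSucc,
        Fin.snoc_last] using this
    rcases eq_or_lt_of_le hτ with hτ0 | hτpos
    · -- τ = 0 : C is unbounded in the direction -c' on x
      have hFc' : ∀ i0, 0 ≤ (F *ᵥ c') i0 := by
        intro i0; have := hrow i0; rw [← hτ0] at this; simpa using this
      have hneg : x ⬝ᵥ c' < 0 := by
        rw [← hτ0] at hbneg; simpa using hbneg
      obtain ⟨c0, hc0⟩ := hC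
      by_cases hw0 : w < c0 ⬝ᵥ x
      · exact ⟨c0, hc0, hw0⟩
      · push_neg at hw0
        set s : ℝ := (w + 1 - c0 ⬝ᵥ x) / (-(x ⬝ᵥ c')) with hs
        have hsnn : 0 ≤ s := div_nonneg (by linarith) (by linarith)
        refine ⟨c0 - s • c', fun i0 => ?_, ?_⟩
        · have : (F *ᵥ (c0 - s • c')) i0 = (F *ᵥ c0) i0 - s * (F *ᵥ c') i0 := by
            simp [Matrix.mulVec_sub, Matrix.mulVec_smul]
          rw [this]
          have := hc0 i0
          have h2 := mul_nonneg hsnn (hFc' i0)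
          linarith
        · have hdot : (c0 - s • c') ⬝ᵥ x = c0 ⬝ᵥ x - s * (c' ⬝ᵥ x) := by
            simp [sub_dotProduct, smul_dotProduct]
          rw [hdot, dotProduct_comm c' x]
          have hmul : s * (-(x ⬝ᵥ c')) = w + 1 - c0 ⬝ᵥ x := by
            rw [hs, div_mul_cancel₀]
            linarith
          nlinarith
    · -- τ > 0
      refine ⟨(-τ⁻¹) • c', fun i0 => ?_, ?_⟩
      · have heq : (F *ᵥ ((-τ⁻¹) • c')) i0 = -(τ⁻¹ * (F *ᵥ c') i0) := by
          simp [Matrix.mulVec_neg, Matrix.mulVec_smul]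
        rw [heq]
        have key1 : τ⁻¹ * ((F *ᵥ c') i0 + g i0 * τ) = τ⁻¹ * (F *ᵥ c') i0 + g i0 := by
          field_simp
        have h3 := mul_nonneg (inv_nonneg.mpr hτ) (hrow i0)
        rw [key1] at h3
        linarith
      · have hdot : ((-τ⁻¹) • c') ⬝ᵥ x = (-τ⁻¹) * (x ⬝ᵥ c') := by
          rw [smul_dotProduct, dotProduct_comm]
          rfl
        rw [hdot]
        have h3 : τ⁻¹ * (x ⬝ᵥ c' + w * τ) < 0 :=
          mul_neg_of_pos_of_neg (inv_pos.mpr hτpos) hbneg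
        have h4 : τ⁻¹ * (x ⬝ᵥ c' + w * τ) = τ⁻¹ * (x ⬝ᵥ c') + w := by field_simp
        nlinarith
  -- Assemble
  have hsup_le : ∀ x : Fin n → ℝ,
      (⨆ c ∈ C, ((c ⬝ᵥ xs : ℝ) : EReal)) ≤ (val : EReal) :=
    fun _ => iSup₂_le fun c hc => EReal.coe_le_coe_iff.mpr (hweak c hc)
  have hlow : ∀ x : Fin n → ℝ, A *ᵥ x = b → (∀ i, 0 ≤ x i) →
      (val : EReal) ≤ ⨆ c ∈ C, ((c ⬝ᵥ x : ℝ) : EReal) := by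
    intro x hAx hx
    by_contra hcon
    push_neg at hcon
    obtain ⟨w, hw1, hw2⟩ := EReal.exists_between_coe_real hcon
    obtain ⟨c, hcC, hcx⟩ := hkey x hAx hx w (by exact_mod_cast hw2)
    have h1 : ((w : ℝ) : EReal) < ((c ⬝ᵥ x : ℝ) : EReal) := EReal.coe_lt_coe_iff.mpr hcx
    have h2 : ((c ⬝ᵥ x : ℝ) : EReal) ≤ ⨆ c ∈ C, ((c ⬝ᵥ x : ℝ) : EReal) :=
      le_iSup₂ (f := fun c (_ : c ∈ C) => ((c ⬝ᵥ x : ℝ) : EReal)) c hcC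
    exact absurd (h1.trans_le h2) (not_lt.mpr hw1.le)
  exact ⟨⟨hAxs, hxs⟩,
    fun x hAx hx => (hsup_le x).trans (hlow x hAx hx),
    le_antisymm (hsup_le xs) (hlow xs hAxs hxs)⟩
end
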